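/- arXiv:2112.14047 — 3 statements merged into one kernel-verified Lean document; each statement's English description precedes it below -/
import Mathlib

section
/- For all positive integers n and r, h_n^{(r)} = (n^{\overline{r}} / (n * (r-1)!)) * (H_{n+r-1} - ψ(r) - γ), where n^{\overline{r}} = n(n+1)···(n+r-1) is the rising factorial, ψ is the digamma function and γ is the Euler–Mascheroni constant. -/
open Filter Finset

/-- Hyperharm numbers: `hh 0 n = 1/n`, `hh (r+1) n = ∑_{k=1}^n hh r k`. -/
noncomputable def hh : ℕ → ℕ → ℝ
  | 0, n => 1 / n
  | r + 1, n => ∑ k ∈ Finset.Icc 1 n, hh r k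

/-- Harmonic numbers `H n = ∑_{k=1}^n 1/k`. -/
noncomputable def harm (n : ℕ) : ℝ := ∑ k ∈ Finset.Icc 1 n, (1 : ℝ) / k

/-- Rising factorial `x^{\overline r} = x (x+1) ⋯ (x+r-1)`. -/
noncomputable def risingFactorial (x : ℝ) (r : ℕ) : ℝ := ∏ i ∈ Finset.range r, (x + i)

/-- Digamma function `ψ = Γ'/Γ` on the reals. -/
noncomputable def digamma (x : ℝ) : ℝ := deriv Real.Gamma x / Real.Gamma x

lemma harm_succ (n : ℕ) : harm (n + 1) = harm n + 1 / (n + 1) := by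
  rw [harm, harm, Finset.sum_Icc_succ_top (by omega)]
  push_cast
  ring

lemma harm_eq (n : ℕ) : harm n = (harmonic n : ℝ) := by
  rw [harm, harmonic_eq_sum_Icc]
  push_cast
  simp [one_div]

lemma key (s n : ℕ) :
    hh (s + 1) n = ((n + s).choose s : ℝ) * (harm (n + s) - harm s) := by
  induction s generalizing n with
  | zero => simp [hh, harm]
  | succ s ih =>
    have sumlem : ∀ m : ℕ, ∑ k ∈ Finset.Icc 1 m, (((k + s).choose s : ℝ) *
        (harm (k + s) - harm s)) =
        ((m + s + 1).choose (s + 1) : ℝ) * (harm (m + s + 1) - harm (s + 1)) := by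
      intro m
      induction m with
      | zero => simp
      | succ m ihm =>
        rw [Finset.sum_Icc_succ_top (by omega), ihm]
        have hm1 : m + 1 + s = m + s + 1 := by omega
        have hm2 : m + s + 1 + 1 = m + s + 2 := by omega
        rw [hm1, hm2]
        have h1 : ((m + s + 2).choose (s + 1) : ℝ)
            = ((m + s + 1).choose s : ℝ) + ((m + s + 1).choose (s + 1) : ℝ) := by
          exact_mod_cast Nat.choose_succ_succ (m + s + 1) s
        have h2 : ((m : ℝ) + s + 2) * ((m + s + 1).choose s : ℝ)
            = ((m + s + 2).choose (s + 1) : ℝ) * ((s : ℝ) + 1) := by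
          exact_mod_cast Nat.add_one_mul_choose_eq (m + s + 1) s
        have e1 : harm (m + s + 2) = harm (m + s + 1) + 1 / ((m : ℝ) + s + 2) := by
          rw [show m + s + 2 = (m + s + 1) + 1 from rfl, harm_succ]; push_cast; ring
        have e2 : harm (s + 1) = harm s + 1 / ((s : ℝ) + 1) := by rw [harm_succ]
        rw [h1] at h2
        rw [e1, e2, h1]
        have hs1 : ((s : ℝ) + 1) ≠ 0 := by positivity
        have hm2' : ((m : ℝ) + s + 2) ≠ 0 := by positivity
        have h4 : ((m + s + 1).choose s : ℝ) / ((s : ℝ) + 1)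
            - (((m + s + 1).choose s : ℝ) + ((m + s + 1).choose (s + 1) : ℝ))
              / ((m : ℝ) + s + 2) = 0 := by
          rw [div_sub_div _ _ hs1 hm2', div_eq_zero_iff]
          left
          linear_combination h2
        linear_combination h4
    show (∑ k ∈ Finset.Icc 1 n, hh (s + 1) k) = _
    rw [Finset.sum_congr rfl fun k _ => ih k, sumlem n]
    congr 2 <;> omega

lemma rf_eq (m k : ℕ) :
    risingFactorial ((m : ℝ) + 1) k = ((m + k).factorial : ℝ) / m.factorial := by
  induction k with
  | zero =>
    simp [risingFactorial, div_self (by positivity : (m.factorial : ℝ) ≠ 0)]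
  | succ k ih =>
    rw [risingFactorial, Finset.prod_range_succ, ← risingFactorial, ih]
    have : (m + (k + 1)).factorial = (m + k).factorial * (m + k + 1) := by
      have : m + (k + 1) = (m + k) + 1 := by omega
      rw [this, Nat.factorial_succ]; ring
    rw [this]
    have h1 : (0:ℝ) < m.factorial := by positivity
    push_cast
    field_simp
    ring

lemma digamma_nat (r : ℕ) (hr : 0 < r) :
    digamma r = harm (r - 1) - Real.eulerMascheroniConstant := by
  obtain ⟨s, rfl⟩ : ∃ s, r = s + 1 := ⟨r - 1, by omega⟩
  rw [digamma]
  have hc : ((s : ℝ) + 1) = ((s : ℕ) : ℝ) + 1 := by norm_num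
  have hG : Real.Gamma ((s + 1 : ℕ) : ℝ) = (s.factorial : ℝ) := by
    push_cast
    exact_mod_cast Real.Gamma_nat_eq_factorial s
  have hd : deriv Real.Gamma ((s + 1 : ℕ) : ℝ)
      = (s.factorial : ℝ) * (-Real.eulerMascheroniConstant + (harmonic s : ℝ)) := by
    push_cast
    exact Real.deriv_Gamma_nat s
  rw [hd, hG, Nat.add_sub_cancel, harm_eq]
  have : (s.factorial : ℝ) ≠ 0 := by positivity
  field_simp
  ring

theorem stmt1 (n r : ℕ) (hn : 0 < n) (hr : 0 < r) :
    hh r n = risingFactorial n r / (n * (r - 1).factorial) *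
      (harm (n + r - 1) - digamma r - Real.eulerMascheroniConstant) := by
  obtain ⟨s, rfl⟩ : ∃ s, r = s + 1 := ⟨r - 1, by omega⟩
  obtain ⟨m, rfl⟩ : ∃ m, n = m + 1 := ⟨n - 1, by omega⟩
  rw [digamma_nat _ (by omega)]
  simp only [Nat.add_sub_cancel]
  have hidx : m + 1 + (s + 1) - 1 = m + 1 + s := by omega
  rw [hidx, key s (m + 1)]
  have hrf : risingFactorial ((m + 1 : ℕ) : ℝ) (s + 1)
      = ((m + (s + 1)).factorial : ℝ) / m.factorial := by
    push_cast [← rf_eq m (s + 1)]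
    norm_num
  rw [hrf]
  have hchn := Nat.choose_mul_factorial_mul_factorial (show s ≤ m + 1 + s by omega)
  rw [Nat.add_sub_cancel] at hchn
  have hch : ((m + 1 + s).choose s : ℝ) * (s.factorial : ℝ) * ((m + 1).factorial : ℝ)
      = ((m + 1 + s).factorial : ℝ) := by exact_mod_cast congrArg (Nat.cast : ℕ → ℝ) hchn
  have h1 : (0:ℝ) < m.factorial := by positivity
  have h2 : (0:ℝ) < s.factorial := by positivity
  have h3 : (0:ℝ) < (m : ℝ) + 1 := by positivity
  have hfac : ((m + 1).factorial : ℝ) = ((m : ℝ) + 1) * m.factorial := by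
    push_cast [Nat.factorial_succ]; ring
  have hidx2 : m + (s + 1) = m + 1 + s := by omega
  rw [hidx2]
  have harmeq : harm (m + 1 + s) - harm s - Real.eulerMascheroniConstant
      + Real.eulerMascheroniConstant + harm s = harm (m + 1 + s) := by ring
  rw [hfac] at hch
  push_cast
  rw [div_div, div_mul_eq_mul_div, eq_div_iff (by positivity)]
  linear_combination (harm (m + 1 + s) - harm s) * hch
end

section
/- For positive integers n and r, h_n^{(r+1)} = (1 + n/r) h_n^{(r)} - (n / (r (n+r))) * binomial(n+r, r). -/
open Finset

noncomputable def Hh (m : ℕ) : ℝ := ∑ k ∈ Finset.Icc 1 m, (1 : ℝ) / k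

lemma Hh_succ (m : ℕ) : Hh (m + 1) = Hh m + 1 / (m + 1 : ℝ) := by
  unfold Hh
  rw [Finset.sum_Icc_succ_top (by omega : 1 ≤ m + 1)]
  push_cast; ring

lemma choose_id (m k : ℕ) :
    ((m : ℝ) + 1) * (Nat.choose m k : ℝ) = (Nat.choose (m + 1) (k + 1) : ℝ) * ((k : ℝ) + 1) := by
  exact_mod_cast congrArg (Nat.cast (R := ℝ)) (Nat.add_one_mul_choose_eq m k)

lemma hh_formula (s : ℕ) : ∀ n, hh (s + 1) n = (Nat.choose (n + s) s : ℝ) * (Hh (n + s) - Hh s) := by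
  induction s with
  | zero =>
    intro n
    rw [hh]
    simp [Hh, hh]
  | succ s ih =>
    intro n
    induction n with
    | zero => simp [hh, Hh]
    | succ n ihn =>
      rw [hh, Finset.sum_Icc_succ_top (by omega : 1 ≤ n + 1)]
      rw [show (∑ k ∈ Finset.Icc 1 n, hh (s + 1) k) = hh (s + 2) n from (by rw [hh]), ihn, ih]
      have e1 : n + 1 + (s + 1) = (n + s + 1) + 1 := by ring
      have e2 : n + (s + 1) = n + s + 1 := by ring
      have e3 : n + 1 + s = n + s + 1 := by ring
      rw [e1, e2, e3, Hh_succ (n + s + 1), Hh_succ s,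
        Nat.choose_succ_succ (n + s + 1) s]
      have hc := choose_id (n + s + 1) s
      rw [Nat.choose_succ_succ (n + s + 1) s] at hc
      have h1 : ((n : ℝ) + s + 2) ≠ 0 := by positivity
      have h2 : ((s : ℝ) + 1) ≠ 0 := by positivity
      push_cast at hc
      have key : ((Nat.choose (n + s + 1) s : ℝ) + (Nat.choose (n + s + 1) (s + 1) : ℝ)) /
          ((n : ℝ) + s + 2) = (Nat.choose (n + s + 1) s : ℝ) / ((s : ℝ) + 1) := by
        rw [div_eq_div_iff h1 h2]
        linear_combination -hc
      push_cast
      linear_combination -key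

theorem stmt5 (n r : ℕ) (hn : 0 < n) (hr : 0 < r) :
    hh (r + 1) n = (1 + (n : ℝ) / r) * hh r n -
      ((n : ℝ) / (r * (n + r))) * (Nat.choose (n + r) r : ℝ) := by
  obtain ⟨s, rfl⟩ : ∃ s, r = s + 1 := ⟨r - 1, by omega⟩
  rw [hh_formula (s + 1) n, hh_formula s n]
  have e1 : n + (s + 1) = (n + s) + 1 := by ring
  rw [e1, Hh_succ (n + s)]
  have hc := choose_id (n + s) s
  have h1 : ((n : ℝ) + s + 1) ≠ 0 := by positivity
  have h2 : ((s : ℝ) + 1) ≠ 0 := by positivity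
  push_cast at hc
  have hb : ((Nat.choose (n + s + 1) (s + 1) : ℕ) : ℝ) =
      (Nat.choose (n + s) s : ℝ) * ((n : ℝ) + s + 1) / ((s : ℝ) + 1) := by
    field_simp
    linear_combination -hc
  rw [Hh_succ s]
  push_cast
  rw [hb]
  field_simp
  ring
end

section
/- For a positive integer r and each nonnegative integer m, the limit γ_{h^{(r)}}(m) := lim_{x→∞} ( sum_{n ≤ x} h_n^{(r)} (log n)^m / n^r - (1/(r-1)!) * (ln x)^{m+2}/(m+2) + (ψ(r)/(r-1)!) * (ln x)^{m+1}/(m+1) ) exists. -/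
open Filter Finset

lemma hh_one (n : ℕ) : hh 1 n = (harmonic n : ℝ) := by
  rw [hh, harmonic_eq_sum_Icc]
  push_cast
  exact Finset.sum_congr rfl fun k _ => one_div _

lemma pascal_harmonic (s n : ℕ) :
    ((n + s + 2).choose (s + 1) : ℝ) * ((harmonic (n + s + 2) : ℝ) - harmonic (s + 1))
      = ((n + s + 1).choose (s + 1) : ℝ) * ((harmonic (n + s + 1) : ℝ) - harmonic (s + 1))
        + ((n + s + 1).choose s : ℝ) * ((harmonic (n + s + 1) : ℝ) - harmonic s) := by
  set A : ℝ := ((n + s + 1).choose (s + 1) : ℝ)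
  set B : ℝ := ((n + s + 1).choose s : ℝ)
  have hp : ((n + s + 2).choose (s + 1) : ℝ) = B + A := by
    have : (n + s + 2).choose (s + 1) = (n + s + 1).choose s + (n + s + 1).choose (s + 1) :=
      Nat.choose_succ_succ (n + s + 1) s
    rw [this]; push_cast; ring
  have hkey : ((n + s + 2 : ℕ) : ℝ) * B = (B + A) * ((s + 1 : ℕ) : ℝ) := by
    have h := Nat.add_one_mul_choose_eq (n + s + 1) s
    have : (n + s + 2) * (n + s + 1).choose s = (n + s + 2).choose (s + 1) * (s + 1) := by
      simpa [Nat.succ_eq_add_one] using h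
    have := congrArg (Nat.cast (R := ℝ)) this
    push_cast at this
    rw [hp] at this
    · push_cast; linarith
  have hH : (harmonic (n + s + 2) : ℝ)
      = (harmonic (n + s + 1) : ℝ) + 1 / ((n + s + 2 : ℕ) : ℝ) := by
    rw [show n + s + 2 = (n + s + 1) + 1 from rfl, harmonic_succ]; push_cast; ring
  have hHs : (harmonic (s + 1) : ℝ) = (harmonic s : ℝ) + 1 / ((s + 1 : ℕ) : ℝ) := by
    rw [harmonic_succ]; push_cast; ring
  have hns : ((n + s + 2 : ℕ) : ℝ) ≠ 0 := by positivity
  have hs1 : ((s + 1 : ℕ) : ℝ) ≠ 0 := by positivity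
  rw [hp, hH]
  have hx : (B + A) * (1 / ((n + s + 2 : ℕ) : ℝ)) = B * (1 / ((s + 1 : ℕ) : ℝ)) := by
    rw [mul_one_div, mul_one_div, div_eq_div_iff hns hs1]
    linarith
  have hBy : B * ((harmonic (n + s + 1) : ℝ) - harmonic s)
      = B * ((harmonic (n + s + 1) : ℝ) - harmonic (s + 1)) + B * (1 / ((s + 1 : ℕ) : ℝ)) := by
    rw [hHs]; ring
  rw [hBy, ← hx]; ring

lemma hh_closed (s n : ℕ) :
    hh (s + 1) n = ((n + s).choose s : ℝ) * ((harmonic (n + s) : ℝ) - harmonic s) := by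
  induction s generalizing n with
  | zero => simp [hh_one]
  | succ s ih =>
    show (∑ k ∈ Finset.Icc 1 n, hh (s + 1) k) = _
    induction n with
    | zero => simp
    | succ n ihn =>
      rw [Finset.sum_Icc_succ_top (by omega), ihn, ih]
      have := pascal_harmonic s n
      have e1 : n + 1 + (s + 1) = n + s + 2 := by ring
      have e2 : n + (s + 1) = n + s + 1 := by ring
      have e3 : n + 1 + s = n + s + 1 := by ring
      rw [e1, e2, e3, this]

open Filter Finset Real

lemma hasDerivAt_logpow (k : ℕ) {x : ℝ} (hx : 0 < x) :
    HasDerivAt (fun t => Real.log t ^ (k + 1) / (k + 1)) (Real.log x ^ k / x) x := by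
  have h1 : HasDerivAt Real.log x⁻¹ x := Real.hasDerivAt_log hx.ne'
  have h2 : HasDerivAt (fun t => Real.log t ^ (k + 1))
      ((k + 1 : ℕ) * Real.log x ^ k * x⁻¹) x := by
    simpa using h1.fun_pow (k + 1)
  have := h2.div_const ((k : ℝ) + 1)
  refine this.congr_deriv ?_
  have : ((k : ℝ) + 1) ≠ 0 := by positivity
  push_cast
  field_simp

lemma continuousOn_logpow (k : ℕ) :
    ContinuousOn (fun t : ℝ => Real.log t ^ k / t) (Set.Ioi 0) := by
  apply ContinuousOn.div
  · exact ((Real.continuousOn_log.mono (by intro x hx; simpa using (ne_of_gt hx))).pow k)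
  · exact continuousOn_id
  · intro x hx; exact ne_of_gt hx

lemma integral_logpow (k : ℕ) {a b : ℝ} (ha : 0 < a) (hab : a ≤ b) :
    ∫ t in a..b, Real.log t ^ k / t
      = Real.log b ^ (k + 1) / (k + 1) - Real.log a ^ (k + 1) / (k + 1) := by
  have hint : IntervalIntegrable (fun t : ℝ => Real.log t ^ k / t) MeasureTheory.volume a b := by
    apply ContinuousOn.intervalIntegrable
    apply (continuousOn_logpow k).mono
    rw [Set.uIcc_of_le hab]
    intro t ht; exact lt_of_lt_of_le ha ht.1
  exact intervalIntegral.integral_eq_sub_of_hasDerivAt (fun t ht => by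
    rw [Set.uIcc_of_le hab] at ht
    exact hasDerivAt_logpow k (lt_of_lt_of_le ha ht.1)) hint

lemma antitoneOn_logpow (k : ℕ) :
    AntitoneOn (fun x : ℝ => Real.log x ^ k / x) (Set.Ici (Real.exp k)) := by
  have hek : (1 : ℝ) ≤ Real.exp k := Real.one_le_exp (by positivity)
  apply antitoneOn_of_deriv_nonpos (convex_Ici _)
  · exact (continuousOn_logpow k).mono (fun x hx => lt_of_lt_of_le (by linarith : (0:ℝ) < Real.exp k) hx)
  · intro x hx
    rw [interior_Ici] at hx
    have hx0 : 0 < x := lt_of_lt_of_le (by linarith) (le_of_lt hx)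
    have h1 : HasDerivAt (fun t => Real.log t ^ k)
        ((k : ℕ) * Real.log x ^ (k - 1) * x⁻¹) x := by
      simpa using (Real.hasDerivAt_log hx0.ne').fun_pow k
    exact ((h1.div (hasDerivAt_id x) hx0.ne')).differentiableAt.differentiableWithinAt
  · intro x hx
    rw [interior_Ici] at hx
    have hx0 : 0 < x := lt_of_lt_of_le (by linarith) (le_of_lt hx)
    have hlx : (k : ℝ) ≤ Real.log x := by
      rw [← Real.log_exp (k : ℝ)]
      exact Real.log_le_log (Real.exp_pos _) (le_of_lt hx)
    have hlx0 : 0 ≤ Real.log x := le_trans (by positivity) hlx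
    have h1 : HasDerivAt (fun t => Real.log t ^ k)
        ((k : ℕ) * Real.log x ^ (k - 1) * x⁻¹) x := by
      simpa using (Real.hasDerivAt_log hx0.ne').fun_pow k
    have h2 := (h1.fun_div (hasDerivAt_id x) hx0.ne')
    simp only [id_eq] at h2
    rw [h2.deriv]
    have hnum : (k : ℕ) * Real.log x ^ (k - 1) * x⁻¹ * x - Real.log x ^ k * 1 ≤ 0 := by
      rcases Nat.eq_zero_or_pos k with hk | hk
      · subst hk; simp
      · have : ((k : ℕ) : ℝ) * Real.log x ^ (k - 1) * x⁻¹ * x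
            = (k : ℝ) * Real.log x ^ (k - 1) := by field_simp
        rw [this, mul_one]
        have hpow : Real.log x ^ k = Real.log x ^ (k - 1) * Real.log x := by
          conv_lhs => rw [← Nat.succ_pred_eq_of_pos hk]
          exact pow_succ _ _
        rw [hpow]
        have := mul_le_mul_of_nonneg_left hlx (pow_nonneg hlx0 (k - 1))
        nlinarith [pow_nonneg hlx0 (k - 1)]
    have hx2 : (0 : ℝ) < x ^ 2 := by positivity
    exact div_nonpos_of_nonpos_of_nonneg hnum (le_of_lt hx2)

lemma key_nat (k : ℕ) : ∃ c : ℝ, Tendsto (fun N : ℕ =>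
    (∑ n ∈ Finset.Icc 1 N, Real.log n ^ k / n) - Real.log N ^ (k + 1) / (k + 1))
    atTop (nhds c) := by
  set f : ℝ → ℝ := fun x => Real.log x ^ k / x with hf
  set F : ℝ → ℝ := fun x => Real.log x ^ (k + 1) / (k + 1) with hF
  set a : ℕ → ℝ := fun N => (∑ n ∈ Finset.Icc 1 N, f n) - F N with ha
  have hf_nonneg : ∀ x : ℝ, 1 ≤ x → 0 ≤ f x := fun x hx =>
    div_nonneg (pow_nonneg (Real.log_nonneg hx) k) (by linarith)
  set N₀ : ℕ := ⌈Real.exp k⌉₊ + 1 with hN₀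
  have hN₀e : Real.exp k ≤ N₀ := le_trans (Nat.le_ceil _) (by exact_mod_cast Nat.le_succ _)
  have hN₀1 : 1 ≤ N₀ := Nat.le_add_left 1 _
  have hmem : ∀ N : ℕ, N₀ ≤ N → ∀ x : ℝ, (N : ℝ) ≤ x → x ∈ Set.Ici (Real.exp k) := by
    intro N hN x hx
    exact le_trans (le_trans hN₀e (by exact_mod_cast hN)) hx
  -- integral bounds
  have hstep : ∀ N : ℕ, N₀ ≤ N →
      F (N + 1) - F N = ∫ t in (N : ℝ)..(N + 1 : ℕ), f t := by
    intro N hN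
    have h0 : (0 : ℝ) < N := by exact_mod_cast lt_of_lt_of_le hN₀1 hN
    rw [integral_logpow k h0 (by push_cast; linarith)]
    push_cast
    rfl
  have hint : ∀ N : ℕ, 1 ≤ N → IntervalIntegrable f MeasureTheory.volume (N : ℝ) ((N : ℝ) + 1) := by
    intro N hN
    apply ContinuousOn.intervalIntegrable
    apply (continuousOn_logpow k).mono
    rw [Set.uIcc_of_le (by linarith)]
    intro t ht
    have : (1 : ℝ) ≤ N := by exact_mod_cast hN
    exact lt_of_lt_of_le (by linarith) ht.1
  have hub : ∀ N : ℕ, N₀ ≤ N → ∫ t in (N : ℝ)..((N : ℝ) + 1), f t ≤ f N := by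
    intro N hN
    have h1 : (1 : ℝ) ≤ N := by exact_mod_cast le_trans hN₀1 hN
    have := intervalIntegral.integral_mono_on (a := (N : ℝ)) (b := (N : ℝ) + 1)
      (f := f) (g := fun _ => f N) (by linarith) (hint N (le_trans hN₀1 hN))
      intervalIntegrable_const ?_
    · simpa using this
    · intro x hx
      exact antitoneOn_logpow k (hmem N hN _ le_rfl) (hmem N hN x hx.1) hx.1
  have hlb : ∀ N : ℕ, N₀ ≤ N → f ((N : ℝ) + 1) ≤ ∫ t in (N : ℝ)..((N : ℝ) + 1), f t := by
    intro N hN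
    have := intervalIntegral.integral_mono_on (a := (N : ℝ)) (b := (N : ℝ) + 1)
      (f := fun _ => f ((N : ℝ) + 1)) (g := f) (by linarith)
      intervalIntegrable_const (hint N (le_trans hN₀1 hN)) ?_
    · simpa using this
    · intro x hx
      exact antitoneOn_logpow k (hmem N hN x hx.1) (hmem N hN _ (by linarith [hx.2])) hx.2
  have hrec : ∀ N : ℕ, 1 ≤ N → a (N + 1) = a N + f (N + 1 : ℕ) - (F (N + 1) - F N) := by
    intro N hN
    simp only [ha]
    rw [Finset.sum_Icc_succ_top (by omega)]
    push_cast
    ring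
  have hanti : ∀ N : ℕ, N₀ ≤ N → a (N + 1) ≤ a N := by
    intro N hN
    have hcast : ((N + 1 : ℕ) : ℝ) = (N : ℝ) + 1 := by push_cast; ring
    rw [hrec N (le_trans hN₀1 hN), hstep N hN, hcast]
    have := hlb N hN
    linarith
  have hlow : ∀ N : ℕ, N₀ ≤ N → a N₀ + f N - f N₀ ≤ a N := by
    intro N hN
    induction N, hN using Nat.le_induction with
    | base => simp
    | succ N hN ih =>
      have hcast : ((N + 1 : ℕ) : ℝ) = (N : ℝ) + 1 := by push_cast; ring
      rw [hrec N (le_trans hN₀1 hN), hstep N hN, hcast]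
      have h2 := hub N hN
      linarith
  -- the shifted sequence converges
  set b : ℕ → ℝ := fun j => a (j + N₀) with hb
  have hbanti : Antitone b := antitone_nat_of_succ_le fun j => by
    show a (j + 1 + N₀) ≤ a (j + N₀)
    rw [show j + 1 + N₀ = j + N₀ + 1 from by omega]
    exact hanti (j + N₀) (Nat.le_add_left _ _)
  have hbdd : BddBelow (Set.range b) := by
    refine ⟨a N₀ - f N₀, fun y hy => ?_⟩
    obtain ⟨j, rfl⟩ := hy
    have h1 : (1 : ℝ) ≤ ((j + N₀ : ℕ) : ℝ) := by exact_mod_cast Nat.le_add_left _ _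
    have := hlow (j + N₀) (Nat.le_add_left _ _)
    have := hf_nonneg ((j + N₀ : ℕ) : ℝ) h1
    simp only [hb]
    linarith
  have hbt : Tendsto b atTop (nhds (⨅ j, b j)) := tendsto_atTop_ciInf hbanti hbdd
  refine ⟨⨅ j, b j, ?_⟩
  exact (tendsto_add_atTop_iff_nat (f := a) N₀).mp hbt

lemma tendsto_logpow_div_atTop (k : ℕ) :
    Tendsto (fun x : ℝ => Real.log x ^ k / x) atTop (nhds 0) := by
  have := Real.isLittleO_pow_log_id_atTop (n := k)
  simpa using this.tendsto_div_nhds_zero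

lemma key_real (k : ℕ) : ∃ c : ℝ, Tendsto (fun x : ℝ =>
    (∑ n ∈ Finset.Icc 1 ⌊x⌋₊, Real.log n ^ k / n) - Real.log x ^ (k + 1) / (k + 1))
    atTop (nhds c) := by
  obtain ⟨c, hc⟩ := key_nat k
  refine ⟨c, ?_⟩
  have h1 : Tendsto (fun x : ℝ =>
      (∑ n ∈ Finset.Icc 1 ⌊x⌋₊, Real.log n ^ k / n)
        - Real.log ⌊x⌋₊ ^ (k + 1) / (k + 1)) atTop (nhds c) :=
    hc.comp tendsto_nat_floor_atTop
  have h2 : Tendsto (fun x : ℝ =>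
      Real.log x ^ (k + 1) / (k + 1) - Real.log ⌊x⌋₊ ^ (k + 1) / (k + 1)) atTop (nhds 0) := by
    have hup : Tendsto (fun x : ℝ => 2 * (Real.log x ^ k / x)) atTop (nhds 0) := by
      simpa using (tendsto_logpow_div_atTop k).const_mul 2
    apply tendsto_of_tendsto_of_tendsto_of_le_of_le' tendsto_const_nhds hup
    · filter_upwards [eventually_ge_atTop (2 : ℝ)] with x hx
      have hx0 : (0 : ℝ) ≤ x := by linarith
      have hfl : ((⌊x⌋₊ : ℝ)) ≤ x := Nat.floor_le hx0
      have hfl1 : (1 : ℝ) ≤ (⌊x⌋₊ : ℝ) := by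
        have : (1 : ℕ) ≤ ⌊x⌋₊ := Nat.le_floor (by exact_mod_cast by linarith : (1:ℕ) ≤ x)
        exact_mod_cast this
      have hlog : Real.log (⌊x⌋₊ : ℝ) ≤ Real.log x := Real.log_le_log (by linarith) hfl
      have hlog0 : 0 ≤ Real.log (⌊x⌋₊ : ℝ) := Real.log_nonneg hfl1
      have := pow_le_pow_left₀ hlog0 hlog (k + 1)
      have hk1 : (0 : ℝ) < (k : ℝ) + 1 := by positivity
      rw [sub_nonneg]
      exact div_le_div_of_nonneg_right this hk1.le
    · filter_upwards [eventually_ge_atTop (2 : ℝ),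
        eventually_ge_atTop (Real.exp k + 1)] with x hx2 hxe
      have hx0 : (0 : ℝ) ≤ x := by linarith
      have hfl : ((⌊x⌋₊ : ℝ)) ≤ x := Nat.floor_le hx0
      have hflgt : x - 1 < (⌊x⌋₊ : ℝ) := by
        have := Nat.lt_floor_add_one x
        linarith
      have he1 : (1 : ℝ) ≤ Real.exp k := Real.one_le_exp (by positivity)
      have hfe : Real.exp k ≤ (⌊x⌋₊ : ℝ) := by linarith
      have hfl0 : (0 : ℝ) < (⌊x⌋₊ : ℝ) := by linarith
      have hflx : Set.uIcc ((⌊x⌋₊ : ℝ)) x ⊆ Set.Ici (Real.exp k) := by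
        rw [Set.uIcc_of_le hfl]
        intro t ht
        exact le_trans hfe ht.1
      have hintg : IntervalIntegrable (fun t : ℝ => Real.log t ^ k / t)
          MeasureTheory.volume ((⌊x⌋₊ : ℝ)) x := by
        apply ContinuousOn.intervalIntegrable
        apply (continuousOn_logpow k).mono
        intro t ht
        exact lt_of_lt_of_le (by linarith : (0:ℝ) < Real.exp k) (hflx ht)
      have heq : Real.log x ^ (k + 1) / (k + 1) - Real.log ⌊x⌋₊ ^ (k + 1) / (k + 1)
          = ∫ t in ((⌊x⌋₊ : ℝ))..x, Real.log t ^ k / t :=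
        (integral_logpow k hfl0 hfl).symm
      rw [heq]
      have hmono := intervalIntegral.integral_mono_on (a := ((⌊x⌋₊ : ℝ))) (b := x)
        (f := fun t : ℝ => Real.log t ^ k / t)
        (g := fun _ => Real.log ((⌊x⌋₊ : ℝ)) ^ k / (⌊x⌋₊ : ℝ)) hfl hintg
        intervalIntegrable_const (fun t ht => by
          refine antitoneOn_logpow k ?_ ?_ ht.1
          · exact hfe
          · exact le_trans hfe ht.1)
      have hval : ∫ _ in ((⌊x⌋₊ : ℝ))..x, Real.log ((⌊x⌋₊ : ℝ)) ^ k / (⌊x⌋₊ : ℝ)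
          = (x - (⌊x⌋₊ : ℝ)) * (Real.log ((⌊x⌋₊ : ℝ)) ^ k / (⌊x⌋₊ : ℝ)) := by
        simp [intervalIntegral.integral_const, smul_eq_mul, mul_div_assoc]
      rw [hval] at hmono
      have hfnn : 0 ≤ Real.log ((⌊x⌋₊ : ℝ)) ^ k / (⌊x⌋₊ : ℝ) := by
        apply div_nonneg (pow_nonneg (Real.log_nonneg (by linarith)) k) (le_of_lt hfl0)
      have hxm : x - (⌊x⌋₊ : ℝ) ≤ 1 := by linarith
      have step1 : (x - (⌊x⌋₊ : ℝ)) * (Real.log ((⌊x⌋₊ : ℝ)) ^ k / (⌊x⌋₊ : ℝ))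
          ≤ Real.log ((⌊x⌋₊ : ℝ)) ^ k / (⌊x⌋₊ : ℝ) := by
        nlinarith [hfnn]
      have hlog : Real.log (⌊x⌋₊ : ℝ) ≤ Real.log x := Real.log_le_log hfl0 hfl
      have hlog0 : 0 ≤ Real.log (⌊x⌋₊ : ℝ) := Real.log_nonneg (by linarith)
      have hpow : Real.log ((⌊x⌋₊ : ℝ)) ^ k ≤ Real.log x ^ k := pow_le_pow_left₀ hlog0 hlog k
      have hden : x / 2 ≤ (⌊x⌋₊ : ℝ) := by linarith
      have step2 : Real.log ((⌊x⌋₊ : ℝ)) ^ k / (⌊x⌋₊ : ℝ) ≤ 2 * (Real.log x ^ k / x) := by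
        have ha1 : Real.log ((⌊x⌋₊ : ℝ)) ^ k / (⌊x⌋₊ : ℝ) ≤ Real.log x ^ k / (x / 2) :=
          div_le_div₀ (pow_nonneg (Real.log_nonneg (by linarith)) k) hpow (by linarith) hden
        have ha2 : Real.log x ^ k / (x / 2) = 2 * (Real.log x ^ k / x) := by
          field_simp
        linarith
      linarith
  have h3 := h1.sub h2
  simp only [sub_zero] at h3
  exact h3.congr (fun x => by ring)

local notation "γ" => Real.eulerMascheroniConstant

lemma harm_bound {n : ℕ} (hn : n ≠ 0) :
    0 < (harmonic n : ℝ) - Real.log n - γ ∧ (harmonic n : ℝ) - Real.log n - γ ≤ 1 / n := by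
  have h1 : γ < (harmonic n : ℝ) - Real.log n := by
    have := Real.eulerMascheroniConstant_lt_eulerMascheroniSeq' n
    rwa [Real.eulerMascheroniSeq', if_neg hn] at this
  have h2 : (harmonic n : ℝ) - Real.log (n + 1) < γ :=
    Real.eulerMascheroniSeq_lt_eulerMascheroniConstant n
  have hn1 : (1 : ℝ) ≤ (n : ℝ) := by exact_mod_cast Nat.one_le_iff_ne_zero.mpr hn
  have hlog : Real.log ((n : ℝ) + 1) - Real.log n ≤ 1 / n := by
    rw [← Real.log_div (by linarith) (by linarith)]
    have := Real.log_le_sub_one_of_pos (x := ((n : ℝ) + 1) / n) (by positivity)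
    have hne : (n : ℝ) ≠ 0 := by linarith
    calc Real.log (((n : ℝ) + 1) / n) ≤ ((n : ℝ) + 1) / n - 1 := this
      _ = 1 / n := by field_simp; ring
  constructor
  · linarith
  · linarith

lemma harmonic_mono : Monotone (fun n => (harmonic n : ℝ)) := by
  apply monotone_nat_of_le_succ
  intro n
  rw [harmonic_succ]
  push_cast
  have : (0:ℝ) ≤ ((n:ℝ)+1)⁻¹ := by positivity
  linarith

lemma fact_bounds (n s : ℕ) :
    n ^ s * n.factorial ≤ (n + s).factorial ∧ (n + s).factorial ≤ (n + s) ^ s * n.factorial := by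
  induction s with
  | zero => simp
  | succ s ih =>
    obtain ⟨ih1, ih2⟩ := ih
    constructor
    · have : n ^ (s + 1) * n.factorial = n * (n ^ s * n.factorial) := by ring
      rw [this, show n + (s + 1) = (n + s) + 1 from rfl, Nat.factorial_succ]
      exact Nat.mul_le_mul (by omega) ih1
    · rw [show n + (s + 1) = (n + s) + 1 from rfl, Nat.factorial_succ]
      calc (n + s + 1) * (n + s).factorial ≤ (n + s + 1) * ((n + s) ^ s * n.factorial) :=
            Nat.mul_le_mul_left _ ih2
        _ ≤ (n + s + 1) * ((n + s + 1) ^ s * n.factorial) :=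
            Nat.mul_le_mul_left _ (Nat.mul_le_mul_right _ (Nat.pow_le_pow_left (by omega) s))
        _ = (n + s + 1) ^ (s + 1) * n.factorial := by ring

lemma choose_bounds (n s : ℕ) :
    n ^ s ≤ s.factorial * (n + s).choose s ∧ s.factorial * (n + s).choose s ≤ (n + s) ^ s := by
  have hkey : (n + s).choose s * s.factorial * n.factorial = (n + s).factorial := by
    have := Nat.choose_mul_factorial_mul_factorial (Nat.le_add_left s n)
    simpa [Nat.add_sub_cancel] using this
  obtain ⟨h1, h2⟩ := fact_bounds n s
  have hfp : 0 < n.factorial := Nat.factorial_pos n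
  constructor
  · have : n ^ s * n.factorial ≤ s.factorial * (n + s).choose s * n.factorial := by
      rw [show s.factorial * (n + s).choose s * n.factorial
          = (n + s).choose s * s.factorial * n.factorial by ring, hkey]
      exact h1
    exact Nat.le_of_mul_le_mul_right this hfp
  · have : s.factorial * (n + s).choose s * n.factorial ≤ (n + s) ^ s * n.factorial := by
      rw [show s.factorial * (n + s).choose s * n.factorial
          = (n + s).choose s * s.factorial * n.factorial by ring, hkey]
      exact h2
    exact Nat.le_of_mul_le_mul_right this hfp

lemma one_add_pow_le (s : ℕ) {t : ℝ} (h0 : 0 ≤ t) (h1 : t ≤ 1) :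
    (1 + t) ^ s ≤ 1 + (2 ^ s - 1) * t := by
  induction s with
  | zero => norm_num
  | succ s ih =>
    have h2 : (1 : ℝ) ≤ 2 ^ s := by exact_mod_cast Nat.one_le_two_pow
    calc (1 + t) ^ (s + 1) = (1 + t) ^ s * (1 + t) := pow_succ _ _
      _ ≤ (1 + (2 ^ s - 1) * t) * (1 + t) := by nlinarith [pow_nonneg (by linarith : (0:ℝ) ≤ 1 + t) s]
      _ ≤ 1 + (2 ^ (s + 1) - 1) * t := by
          have h3 : (2:ℝ) ^ (s+1) = 2 * 2 ^ s := by rw [pow_succ]; ring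
          nlinarith [mul_le_mul_of_nonneg_left h1 (mul_nonneg (sub_nonneg.mpr h2) h0)]

lemma digamma_nat_s9 (s : ℕ) : digamma ((s : ℝ) + 1) = (harmonic s : ℝ) - γ := by
  rw [digamma, Real.deriv_Gamma_nat s, Real.Gamma_nat_eq_factorial]
  have : (s.factorial : ℝ) ≠ 0 := by positivity
  field_simp
  ring

noncomputable def EE (s m : ℕ) (n : ℕ) : ℝ :=
  hh (s + 1) n * Real.log n ^ m / (n : ℝ) ^ (s + 1)
    - (1 / s.factorial) * (Real.log n ^ (m + 1) / n)
    + (((harmonic s : ℝ) - γ) / s.factorial) * (Real.log n ^ m / n)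

lemma EE_zero (s m : ℕ) : EE s m 0 = 0 := by
  simp [EE]

lemma EE_core (s m : ℕ) {ν L Hs Hns D sf : ℝ}
    (hν1 : 1 ≤ ν) (hL : L = Real.log ν) (hlog2 : Real.log 2 + γ + 1 ≤ L)
    (hsν : (s : ℝ) ≤ ν)
    (hD1 : ν ^ s ≤ D) (hD2 : D ≤ (ν + s) ^ s)
    (hsf1 : 1 ≤ sf)
    (hmono : Hs ≤ Hns) (hHs0 : 0 ≤ Hs)
    (hb1 : 0 < Hns - Real.log (ν + s) - γ) (hb2 : Hns - Real.log (ν + s) - γ ≤ 1 / (ν + s)) :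
    |D / sf * (Hns - Hs) * L ^ m / (ν ^ s * ν) - 1 / sf * (L ^ (m + 1) / ν)
        + (Hs - γ) / sf * (L ^ m / ν)|
      ≤ (2 ^ (s + 1) * s + s + 1 : ℝ) * L ^ (m + 1) / ν ^ 2 := by
  have hν0 : (0 : ℝ) < ν := by linarith
  have hγ : (0:ℝ) < γ := lt_trans (by norm_num) Real.one_half_lt_eulerMascheroniConstant
  have hlogtwo : (0:ℝ) < Real.log 2 := Real.log_pos (by norm_num)
  have hL1 : 1 ≤ L := by linarith
  have hL0 : 0 ≤ L := by linarith
  have hsf0 : sf ≠ 0 := by linarith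
  have hνs0 : (0 : ℝ) < ν ^ s := by positivity
  set q : ℝ := D / ν ^ s with hq
  have hq1 : 1 ≤ q := by
    rw [hq, le_div_iff₀ hνs0]; linarith
  have hq2 : q - 1 ≤ 2 ^ s * s / ν := by
    have ht0 : 0 ≤ (s : ℝ) / ν := by positivity
    have ht1 : (s : ℝ) / ν ≤ 1 := by rw [div_le_one hν0]; exact hsν
    have h1 : q ≤ (1 + (s : ℝ) / ν) ^ s := by
      rw [hq, div_le_iff₀ hνs0]
      calc D ≤ (ν + s) ^ s := hD2
        _ = (1 + (s : ℝ) / ν) ^ s * ν ^ s := by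
            rw [← mul_pow]; congr 1; field_simp
    have h2 := one_add_pow_le s ht0 ht1
    have h3 : (2 ^ s - 1 : ℝ) * ((s : ℝ) / ν) ≤ 2 ^ s * s / ν := by
      rw [mul_div_assoc]
      exact mul_le_mul_of_nonneg_right (by linarith) ht0
    linarith
  have hlogns : 0 ≤ Real.log (ν + s) - L ∧ Real.log (ν + s) - L ≤ (s : ℝ) / ν := by
    constructor
    · have h := Real.log_le_log hν0 (by linarith : ν ≤ ν + s)
      rw [hL]; linarith
    · have hdiv : Real.log (ν + s) - L = Real.log ((ν + s) / ν) := by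
        rw [hL, Real.log_div (by linarith) (by linarith)]
      rw [hdiv]
      have h := Real.log_le_sub_one_of_pos (x := (ν + s) / ν) (by positivity)
      calc Real.log ((ν + s) / ν) ≤ (ν + s) / ν - 1 := h
        _ = (s : ℝ) / ν := by field_simp; ring
  have hH3 : |Hns - L - γ| ≤ ((s : ℝ) + 1) / ν := by
    have hiv : 1 / (ν + s) ≤ 1 / ν :=
      one_div_le_one_div_of_le hν0 (by linarith)
    have hposq : (0:ℝ) ≤ ((s : ℝ) + 1) / ν := by positivity
    rw [abs_le]
    constructor
    · linarith [hlogns.1]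
    · have h4 : ((s:ℝ) + 1) / ν = (s:ℝ)/ν + 1/ν := by field_simp
      rw [h4]
      linarith [hlogns.2]
  have hH2 : Hns - Hs ≤ 2 * L := by
    have h1 : Hns ≤ Real.log (ν + s) + γ + 1 / (ν + s) := by linarith
    have h2 : Real.log (ν + s) ≤ L + Real.log 2 := by
      have hle : ν + s ≤ 2 * ν := by linarith
      have h3 := Real.log_le_log (by linarith : (0:ℝ) < ν + s) hle
      rw [Real.log_mul (by norm_num) (by linarith)] at h3
      rw [hL]
      linarith
    have h4 : 1 / (ν + s) ≤ 1 := by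
      rw [div_le_one (by linarith)]; linarith
    linarith
  have hEE : D / sf * (Hns - Hs) * L ^ m / (ν ^ s * ν) - 1 / sf * (L ^ (m + 1) / ν)
        + (Hs - γ) / sf * (L ^ m / ν)
      = (L ^ m / (sf * ν)) * ((q - 1) * (Hns - Hs) + (Hns - L - γ)) := by
    rw [hq, pow_succ]
    generalize L ^ m = M
    generalize hP : ν ^ s = P at hνs0
    have hPne : P ≠ 0 := hνs0.ne'
    field_simp
    ring
  have habs : |D / sf * (Hns - Hs) * L ^ m / (ν ^ s * ν) - 1 / sf * (L ^ (m + 1) / ν)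
        + (Hs - γ) / sf * (L ^ m / ν)|
      ≤ (L ^ m / ν) * ((2 ^ s * s / ν) * (2 * L) + ((s : ℝ) + 1) / ν) := by
    rw [hEE, abs_mul]
    have h1 : |L ^ m / (sf * ν)| ≤ L ^ m / ν := by
      rw [abs_of_nonneg (by positivity)]
      exact div_le_div_of_nonneg_left (by positivity) hν0 (by nlinarith)
    have h2 : |(q - 1) * (Hns - Hs) + (Hns - L - γ)|
        ≤ (2 ^ s * s / ν) * (2 * L) + ((s : ℝ) + 1) / ν := by
      calc |(q - 1) * (Hns - Hs) + (Hns - L - γ)|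
          ≤ |(q - 1) * (Hns - Hs)| + |Hns - L - γ| := abs_add_le _ _
        _ ≤ (2 ^ s * s / ν) * (2 * L) + ((s : ℝ) + 1) / ν := by
            apply add_le_add ?_ hH3
            rw [abs_mul, abs_of_nonneg (by linarith), abs_of_nonneg (by linarith)]
            exact mul_le_mul hq2 hH2 (by linarith) (by positivity)
    exact mul_le_mul h1 h2 (abs_nonneg _) (by positivity)
  have hexpand : (L ^ m / ν) * ((2 ^ s * s / ν) * (2 * L) + ((s : ℝ) + 1) / ν)
      = (2 * 2 ^ s * s * L ^ (m + 1) + ((s : ℝ) + 1) * L ^ m) / ν ^ 2 := by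
    rw [pow_succ]
    generalize L ^ m = M
    generalize (2:ℝ) ^ s = T
    field_simp
  have hfin : (2 * 2 ^ s * (s : ℝ) * L ^ (m + 1) + ((s : ℝ) + 1) * L ^ m) / ν ^ 2
      ≤ (2 ^ (s + 1) * s + s + 1 : ℝ) * L ^ (m + 1) / ν ^ 2 := by
    have hLm : L ^ m ≤ L ^ (m + 1) := pow_le_pow_right₀ hL1 (Nat.le_succ m)
    have h2s : (2:ℝ) ^ (s + 1) = 2 * 2 ^ s := by rw [pow_succ]; ring
    have hnum : 2 * 2 ^ s * (s : ℝ) * L ^ (m + 1) + ((s : ℝ) + 1) * L ^ m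
        ≤ (2 ^ (s + 1) * s + s + 1 : ℝ) * L ^ (m + 1) := by
      rw [h2s]
      have hexp : (2 * 2 ^ s * (s:ℝ) + s + 1) * L ^ (m + 1)
          = 2 * 2 ^ s * (s:ℝ) * L ^ (m + 1) + ((s:ℝ) + 1) * L ^ (m + 1) := by ring
      rw [hexp]
      have := mul_le_mul_of_nonneg_left hLm (by positivity : (0:ℝ) ≤ (s : ℝ) + 1)
      linarith
    exact div_le_div_of_nonneg_right hnum (by positivity)
  calc |D / sf * (Hns - Hs) * L ^ m / (ν ^ s * ν) - 1 / sf * (L ^ (m + 1) / ν)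
        + (Hs - γ) / sf * (L ^ m / ν)| ≤ _ := habs
    _ = _ := hexpand
    _ ≤ _ := hfin

lemma EE_est (s m : ℕ) : ∀ᶠ n : ℕ in atTop,
    |EE s m n| ≤ (2 ^ (s + 1) * s + s + 1 : ℝ) * Real.log n ^ (m + 1) / (n : ℝ) ^ 2 := by
  have hlogev : ∀ᶠ n : ℕ in atTop, Real.log 2 + γ + 1 ≤ Real.log n := by
    have h := Real.tendsto_log_atTop.comp (tendsto_natCast_atTop_atTop (R := ℝ))
    exact h.eventually_ge_atTop _
  filter_upwards [eventually_ge_atTop 1, eventually_ge_atTop s, hlogev]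
    with n hn1 hns hlog2
  have hsf0 : ((s.factorial : ℕ) : ℝ) ≠ 0 := by positivity
  have hcast : ((n + s : ℕ) : ℝ) = (n : ℝ) + s := by push_cast; ring
  have hb := harm_bound (n := n + s) (by omega)
  rw [hcast] at hb
  obtain ⟨hcb1, hcb2⟩ := choose_bounds n s
  have hexpr : EE s m n = ((s.factorial : ℝ) * ((n + s).choose s : ℝ)) / (s.factorial : ℝ)
        * ((harmonic (n + s) : ℝ) - (harmonic s : ℝ)) * Real.log n ^ m / ((n : ℝ) ^ s * n)
      - 1 / (s.factorial : ℝ) * (Real.log n ^ (m + 1) / n)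
      + ((harmonic s : ℝ) - γ) / (s.factorial : ℝ) * (Real.log n ^ m / n) := by
    rw [EE, hh_closed s n, pow_succ, mul_div_cancel_left₀ _ hsf0]
  rw [hexpr]
  apply EE_core s m (by exact_mod_cast hn1) rfl hlog2 (by exact_mod_cast hns)
    (by exact_mod_cast hcb1) ?_
    (by exact_mod_cast Nat.one_le_iff_ne_zero.mpr (Nat.factorial_ne_zero s))
    (harmonic_mono (Nat.le_add_left s n)) ?_ hb.1 hb.2
  · calc ((s.factorial : ℝ) * ((n + s).choose s : ℝ)) = (((s.factorial * (n + s).choose s : ℕ)) : ℝ) := by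
          push_cast; ring
      _ ≤ (((n + s) ^ s : ℕ) : ℝ) := by exact_mod_cast hcb2
      _ = ((n : ℝ) + s) ^ s := by push_cast; ring
  · show (0:ℝ) ≤ ((harmonic s : ℚ) : ℝ)
    rcases Nat.eq_zero_or_pos s with h | h
    · simp [h]
    · exact_mod_cast (harmonic_pos (Nat.pos_iff_ne_zero.mp h)).le

lemma summable_EE (s m : ℕ) : Summable (EE s m) := by
  set K : ℝ := (2 ^ (s + 1) * s + s + 1 : ℝ) with hK
  have hK0 : 0 ≤ K := by rw [hK]; positivity
  apply Summable.of_norm_bounded_eventually_nat (g := fun n => K * ((n : ℝ) ^ (-(3/2) : ℝ)))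
    ((Real.summable_nat_rpow.mpr (by norm_num)).mul_left K)
  have hev2 : ∀ᶠ n : ℕ in atTop, Real.log n ^ (2 * (m + 1)) ≤ (n : ℝ) := by
    have h := (Real.isLittleO_pow_log_id_atTop (n := 2 * (m + 1))).bound
      (by norm_num : (0:ℝ) < 1)
    have h2 := (tendsto_natCast_atTop_atTop (R := ℝ)).eventually h
    filter_upwards [h2, eventually_ge_atTop 1] with n hn hn1
    have hn1' : (1 : ℝ) ≤ (n : ℝ) := by exact_mod_cast hn1
    have hl0 : 0 ≤ Real.log n := Real.log_nonneg hn1'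
    simp only [norm_pow, Real.norm_eq_abs, id_eq, one_mul] at hn
    calc Real.log n ^ (2 * (m + 1)) = |Real.log n| ^ (2 * (m + 1)) := by
          rw [abs_of_nonneg hl0]
      _ ≤ |(n : ℝ)| := hn
      _ = (n : ℝ) := abs_of_nonneg (by linarith)
  filter_upwards [EE_est s m, hev2, eventually_ge_atTop 1] with n h1 h2 hn1
  have hn1' : (1 : ℝ) ≤ (n : ℝ) := by exact_mod_cast hn1
  have hν0 : (0 : ℝ) < (n : ℝ) := by linarith
  have hl0 : 0 ≤ Real.log n := Real.log_nonneg hn1'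
  have hsq : Real.log n ^ (m + 1) ≤ Real.sqrt n := by
    refine (Real.le_sqrt (by positivity) (by positivity)).mpr ?_
    calc (Real.log n ^ (m + 1)) ^ 2 = Real.log n ^ (2 * (m + 1)) := by
          rw [← pow_mul]; ring_nf
      _ ≤ (n : ℝ) := h2
  have hr : Real.sqrt (n : ℝ) / (n : ℝ) ^ 2 = (n : ℝ) ^ (-(3/2) : ℝ) := by
    rw [Real.sqrt_eq_rpow, ← Real.rpow_natCast (n : ℝ) 2, ← Real.rpow_sub hν0]
    norm_num
  calc ‖EE s m n‖ = |EE s m n| := rfl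
    _ ≤ K * Real.log n ^ (m + 1) / (n : ℝ) ^ 2 := h1
    _ ≤ K * Real.sqrt n / (n : ℝ) ^ 2 := by
        apply div_le_div_of_nonneg_right ?_ (by positivity)
        exact mul_le_mul_of_nonneg_left hsq hK0
    _ = K * (Real.sqrt n / (n : ℝ) ^ 2) := by ring
    _ = K * ((n : ℝ) ^ (-(3/2) : ℝ)) := by rw [hr]

lemma tendsto_sum_EE (s m : ℕ) : Tendsto (fun N : ℕ => ∑ n ∈ Finset.Icc 1 N, EE s m n)
    atTop (nhds (∑' n, EE s m (n + 1))) := by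
  have hs : Summable (fun n => EE s m (n + 1)) := (summable_nat_add_iff 1).mpr (summable_EE s m)
  apply hs.hasSum.tendsto_sum_nat.congr
  intro N
  rw [Finset.range_eq_Ico, Finset.sum_Ico_add' (fun i => EE s m i) 0 N (c := 1),
    Finset.Ico_add_one_right_eq_Icc]

theorem stmt9 (r m : ℕ) (hr : 0 < r) :
    ∃ c : ℝ, Tendsto (fun x : ℝ =>
        (∑ n ∈ Finset.Icc 1 ⌊x⌋₊, hh r n * (Real.log n) ^ m / (n : ℝ) ^ r)
          - (1 / (r - 1).factorial) * (Real.log x) ^ (m + 2) / (m + 2)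
          + (digamma r / (r - 1).factorial) * (Real.log x) ^ (m + 1) / (m + 1))
      atTop (nhds c) := by
  obtain ⟨s, rfl⟩ : ∃ s, r = s + 1 := ⟨r - 1, by omega⟩
  obtain ⟨cA, hA⟩ := key_real (m + 1)
  obtain ⟨cB, hB⟩ := key_real m
  have hC : Tendsto (fun x : ℝ => ∑ n ∈ Finset.Icc 1 ⌊x⌋₊, EE s m n) atTop
      (nhds (∑' n, EE s m (n + 1))) :=
    (tendsto_sum_EE s m).comp tendsto_nat_floor_atTop
  refine ⟨(1 / (s.factorial : ℝ)) * cA - (((harmonic s : ℝ) - γ) / (s.factorial : ℝ)) * cB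
    + ∑' n, EE s m (n + 1), ?_⟩
  have h := ((hA.const_mul (1 / (s.factorial : ℝ))).sub
      (hB.const_mul (((harmonic s : ℝ) - γ) / (s.factorial : ℝ)))).add hC
  apply h.congr
  intro x
  have hψ : digamma ((s + 1 : ℕ) : ℝ) = (harmonic s : ℝ) - γ := by
    rw [Nat.cast_add, Nat.cast_one]
    exact digamma_nat_s9 s
  have hsplit : ∑ n ∈ Finset.Icc 1 ⌊x⌋₊, hh (s + 1) n * Real.log n ^ m / (n : ℝ) ^ (s + 1)
      = (∑ n ∈ Finset.Icc 1 ⌊x⌋₊, EE s m n)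
        + (1 / (s.factorial : ℝ)) * (∑ n ∈ Finset.Icc 1 ⌊x⌋₊, Real.log n ^ (m + 1) / n)
        - (((harmonic s : ℝ) - γ) / (s.factorial : ℝ))
            * (∑ n ∈ Finset.Icc 1 ⌊x⌋₊, Real.log n ^ m / n) := by
    rw [Finset.mul_sum, Finset.mul_sum, ← Finset.sum_add_distrib, ← Finset.sum_sub_distrib]
    apply Finset.sum_congr rfl
    intro n _
    rw [EE]
    ring
  simp only [Nat.add_sub_cancel]
  rw [hψ, hsplit]
  push_cast
  ring
end
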